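/- Let A, B be positive semidefinite operators on a finite-dimensional Hilbert space and Φ a positive linear map between matrix algebras. Then Φ(B⁰AB⁰)·Φ(B)⁻¹·Φ(B⁰AB⁰) ≤ Φ(B⁰AB⁻¹AB⁰), where inverses are generalized (Moore–Penrose) inverses. -/

import Mathlib

open Matrix ComplexOrder

/-- `P` is the support projection of the matrix `M`: the orthogonal projection onto the
range of `M`. -/
def IsSupportProjection {k : ℕ} (M P : Matrix (Fin k) (Fin k) ℂ) : Prop :=
  P.IsHermitian ∧ P * P = P ∧ LinearMap.range P.mulVecLin = LinearMap.range M.mulVecLin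

/-- `X` is the Moore–Penrose (generalized) inverse of `M`. -/
def IsMoorePenroseInverse {k : ℕ} (M X : Matrix (Fin k) (Fin k) ℂ) : Prop :=
  M * X * M = M ∧ X * M * X = X ∧ (M * X)ᴴ = M * X ∧ (X * M)ᴴ = X * M

/-- Uniqueness of the Moore-Penrose inverse. -/
lemma mp_unique {k : ℕ} {M X Y : Matrix (Fin k) (Fin k) ℂ}
    (hX : IsMoorePenroseInverse M X) (hY : IsMoorePenroseInverse M Y) : X = Y := by
  obtain ⟨hX1, hX2, hX3, hX4⟩ := hX
  obtain ⟨hY1, hY2, hY3, hY4⟩ := hY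
  have hMX : M * X = M * Y := by
    calc M * X = (M * X)ᴴ := hX3.symm
    _ = Xᴴ * ((M * Y * M)ᴴ) := by rw [hY1, conjTranspose_mul]
    _ = Xᴴ * (Mᴴ * (M * Y)ᴴ) := by rw [conjTranspose_mul (M*Y) M]
    _ = (M * X)ᴴ * (M * Y)ᴴ := by rw [conjTranspose_mul M X, mul_assoc]
    _ = (M * X) * (M * Y) := by rw [hX3, hY3]
    _ = (M * X * M) * Y := by simp only [mul_assoc]
    _ = M * Y := by rw [hX1]
  have hXM : X * M = Y * M := by
    calc X * M = (X * M)ᴴ := hX4.symm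
    _ = ((M * Y * M)ᴴ) * Xᴴ := by rw [hY1, conjTranspose_mul]
    _ = ((Y * M)ᴴ * Mᴴ) * Xᴴ := by rw [mul_assoc M Y M, conjTranspose_mul M (Y*M)]
    _ = (Y * M)ᴴ * (X * M)ᴴ := by rw [conjTranspose_mul X M, mul_assoc]
    _ = (Y * M) * (X * M) := by rw [hX4, hY4]
    _ = Y * (M * X * M) := by simp only [mul_assoc]
    _ = Y * M := by rw [hX1]
  calc X = X * M * X := hX2.symm
  _ = Y * M * X := by rw [hXM]
  _ = Y * (M * Y) := by rw [mul_assoc, hMX]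
  _ = Y * M * Y := by rw [mul_assoc]
  _ = Y := hY2

/-- The MP inverse of a Hermitian matrix is Hermitian. -/
lemma mp_hermitian {k : ℕ} {M X : Matrix (Fin k) (Fin k) ℂ} (hM : Mᴴ = M)
    (hX : IsMoorePenroseInverse M X) : Xᴴ = X := by
  obtain ⟨h1, h2, h3, h4⟩ := hX
  have e1 := congrArg conjTranspose h1
  have e2 := congrArg conjTranspose h2
  simp only [conjTranspose_mul, hM] at e1 e2
  have hX' : IsMoorePenroseInverse M Xᴴ := by
    refine ⟨?_, ?_, ?_, ?_⟩
    · rw [mul_assoc]; exact e1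
    · rw [mul_assoc]; exact e2
    · calc (M * Xᴴ)ᴴ = Xᴴᴴ * Mᴴ := conjTranspose_mul M Xᴴ
      _ = X * M := by rw [conjTranspose_conjTranspose, hM]
      _ = (X * M)ᴴ := h4.symm
      _ = Mᴴ * Xᴴ := conjTranspose_mul X M
      _ = M * Xᴴ := by rw [hM]
    · calc (Xᴴ * M)ᴴ = Mᴴ * Xᴴᴴ := conjTranspose_mul Xᴴ M
      _ = M * X := by rw [conjTranspose_conjTranspose, hM]
      _ = (M * X)ᴴ := h3.symm
      _ = Xᴴ * Mᴴ := conjTranspose_mul M X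
      _ = Xᴴ * M := by rw [hM]
  exact mp_unique hX' ⟨h1, h2, h3, h4⟩

/-- Hermitian idempotents with the same range are equal. -/
lemma proj_unique {n : ℕ} {P Q : Matrix (Fin n) (Fin n) ℂ} (hP : Pᴴ = P) (hP2 : P * P = P)
    (hQ : Qᴴ = Q) (hQ2 : Q * Q = Q)
    (h : LinearMap.range P.mulVecLin = LinearMap.range Q.mulVecLin) : P = Q := by
  have key : ∀ (P' Q' : Matrix (Fin n) (Fin n) ℂ), Q' * Q' = Q' →
      (LinearMap.range P'.mulVecLin ≤ LinearMap.range Q'.mulVecLin) → Q' * P' = P' := by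
    intro P' Q' hQ2' hle
    have : ∀ v, (Q' * P') *ᵥ v = P' *ᵥ v := by
      intro v
      obtain ⟨u, hu⟩ := hle ⟨v, rfl⟩
      simp only [mulVecLin_apply] at hu
      calc (Q' * P') *ᵥ v = Q' *ᵥ (P' *ᵥ v) := by rw [mulVec_mulVec]
      _ = Q' *ᵥ (Q' *ᵥ u) := by rw [hu]
      _ = (Q' * Q') *ᵥ u := by rw [mulVec_mulVec]
      _ = Q' *ᵥ u := by rw [hQ2']
      _ = P' *ᵥ v := hu
    ext i j
    have := congrFun (this (Pi.single j 1)) i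
    simpa [mulVec_single] using this
  have hQP : Q * P = P := key P Q hQ2 h.le
  have hPQ : P * Q = Q := key Q P hP2 h.ge
  calc P = (Q * P)ᴴ := by rw [hQP, hP]
  _ = Pᴴ * Qᴴ := conjTranspose_mul Q P
  _ = P * Q := by rw [hP, hQ]
  _ = Q := hPQ

lemma psd_vecMulVec {n : ℕ} (v : Fin n → ℂ) : (vecMulVec v (star v)).PosSemidef := by
  rw [vecMulVec_eq Unit, ← conjTranspose_replicateCol]
  exact posSemidef_self_mul_conjTranspose _

lemma psd_sum {n : ℕ} {N : Type*} [Fintype N] (f : N → Matrix (Fin n) (Fin n) ℂ)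
    (h : ∀ i, (f i).PosSemidef) : (∑ i, f i).PosSemidef :=
  Finset.sum_induction f _ (fun _ _ ha hb => ha.add hb) .zero (fun i _ => h i)

lemma sum_decomp {m : ℕ} (V : Matrix (Fin m) (Fin m) ℂ) (d : Fin m → ℂ) :
    V * diagonal d * Vᴴ
      = ∑ i, d i • vecMulVec (fun r => V r i) (star fun r => V r i) := by
  ext a b
  rw [Matrix.mul_apply]
  simp only [mul_diagonal, conjTranspose_apply, Matrix.sum_apply,
    Matrix.smul_apply, vecMulVec_apply, Pi.star_apply, smul_eq_mul, RCLike.star_def]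
  exact Finset.sum_congr rfl fun j _ => by ring

lemma sum_decomp' {m : ℕ} (V : Matrix (Fin m) (Fin m) ℂ) :
    V * Vᴴ = ∑ i, vecMulVec (fun r => V r i) (star fun r => V r i) := by
  have h := sum_decomp V (fun _ => 1)
  simpa [Matrix.diagonal_one] using h

lemma quad_expand {k : ℕ} (Q X : Matrix (Fin k) (Fin k) ℂ) (c : ℂ) :
    (X + c • 1)ᴴ * Q * (X + c • 1)
      = Xᴴ * Q * X + (star c) • (Q * X) + c • (Xᴴ * Q) + (c * star c) • Q := by
  simp only [conjTranspose_add, conjTranspose_smul, conjTranspose_one, add_mul, mul_add,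
    smul_mul_assoc, mul_smul_comm, mul_one, one_mul, smul_smul, smul_add]
  abel

/-- **A Kadison-type inequality.** For positive semidefinite `A, B` and a positive
linear map `Φ`, one has `Φ(B⁰AB⁰) Φ(B)⁻¹ Φ(B⁰AB⁰) ≤ Φ(B⁰AB⁻¹AB⁰)`, where `B⁰` is the
support projection of `B` and the inverses are generalized (Moore–Penrose) inverses. -/
theorem kadison_type_inequality {m k : ℕ}
    (Φ : Matrix (Fin m) (Fin m) ℂ →ₗ[ℂ] Matrix (Fin k) (Fin k) ℂ)
    (hΦ : ∀ X : Matrix (Fin m) (Fin m) ℂ, X.PosSemidef → (Φ X).PosSemidef)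
    (A B : Matrix (Fin m) (Fin m) ℂ) (hA : A.PosSemidef) (hB : B.PosSemidef)
    (P : Matrix (Fin m) (Fin m) ℂ) (hP : IsSupportProjection B P)
    (Binv : Matrix (Fin m) (Fin m) ℂ) (hBinv : IsMoorePenroseInverse B Binv)
    (Cinv : Matrix (Fin k) (Fin k) ℂ) (hCinv : IsMoorePenroseInverse (Φ B) Cinv) :
    (Φ (P * A * Binv * A * P) - Φ (P * A * P) * Cinv * Φ (P * A * P)).PosSemidef := by
  obtain ⟨hPH, hPP, hPrange⟩ := hP
  have hBH : Bᴴ = B := hB.isHermitian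
  have hBinvH : Binvᴴ = Binv := mp_hermitian hBH hBinv
  have hΦBH : (Φ B)ᴴ = Φ B := (hΦ B hB).isHermitian
  have hCinvH : Cinvᴴ = Cinv := mp_hermitian hΦBH hCinv
  obtain ⟨hb1, hb2, hb3, hb4⟩ := hBinv
  obtain ⟨hc1, hc2, hc3, hc4⟩ := hCinv
  have hcomm : B * Binv = Binv * B := by
    calc B * Binv = (B * Binv)ᴴ := hb3.symm
    _ = Binvᴴ * Bᴴ := conjTranspose_mul B Binv
    _ = Binv * B := by rw [hBinvH, hBH]
  have hidem : (B * Binv) * (B * Binv) = B * Binv := by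
    calc (B * Binv) * (B * Binv) = (B * Binv * B) * Binv := by simp only [mul_assoc]
    _ = B * Binv := by rw [hb1]
  have hrange : LinearMap.range (B * Binv).mulVecLin = LinearMap.range B.mulVecLin := by
    apply le_antisymm
    · rw [mulVecLin_mul]; exact LinearMap.range_comp_le_range _ _
    · conv_lhs => rw [← hb1]
      rw [mulVecLin_mul]; exact LinearMap.range_comp_le_range _ _
  have hPeq : P = B * Binv := proj_unique hPH hPP hb3 hidem (hPrange.trans hrange.symm)
  have hBinvPSD : Binv.PosSemidef := by
    have h := hB.conjTranspose_mul_mul_same Binv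
    rwa [hBinvH, hb2] at h
  open scoped MatrixOrder in
  set S := CFC.sqrt Binv with hSdef
  open scoped MatrixOrder in
  have hSS : S * S = Binv := CFC.sqrt_mul_sqrt_self Binv hBinvPSD.nonneg
  open scoped MatrixOrder in
  have hSH : Sᴴ = S := (CFC.sqrt_nonneg Binv).posSemidef.isHermitian
  have hW : (S * A * S).IsHermitian := by
    have h := isHermitian_conjTranspose_mul_mul S hA.isHermitian
    rwa [hSH] at h
  set U : Matrix (Fin m) (Fin m) ℂ := (hW.eigenvectorUnitary : Matrix (Fin m) (Fin m) ℂ)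
    with hUdef
  have hUU : U * Uᴴ = 1 := by
    have h := (Matrix.mem_unitaryGroup_iff).mp hW.eigenvectorUnitary.2
    rwa [star_eq_conjTranspose] at h
  have hU'U : Uᴴ * U = 1 := by
    have h := (Matrix.mem_unitaryGroup_iff').mp hW.eigenvectorUnitary.2
    rwa [star_eq_conjTranspose] at h
  set lam := hW.eigenvalues with hlam
  set dc : Fin m → ℂ := fun i => ((lam i : ℝ) : ℂ) with hdc
  have hspec : S * A * S = U * diagonal dc * Uᴴ := by
    have h := hW.spectral_theorem
    rw [Unitary.conjStarAlgAut_apply, star_eq_conjTranspose] at h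
    exact h
  have hVH : (B * S * U)ᴴ = Uᴴ * (S * B) := by
    rw [conjTranspose_mul, conjTranspose_mul, hSH, hBH]
  -- the three identities
  have hidB : (B * S * U) * (B * S * U)ᴴ = B := by
    rw [hVH]
    calc B * S * U * (Uᴴ * (S * B)) = B * S * (U * Uᴴ) * (S * B) := by simp only [mul_assoc]
    _ = B * (S * S) * B := by rw [hUU, mul_one]; simp only [mul_assoc]
    _ = B * Binv * B := by rw [hSS]
    _ = B := hb1
  have hidP : (B * S * U) * diagonal dc * (B * S * U)ᴴ = P * A * P := by
    rw [hVH]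
    calc B * S * U * diagonal dc * (Uᴴ * (S * B))
        = B * S * (U * diagonal dc * Uᴴ) * (S * B) := by simp only [mul_assoc]
    _ = B * S * (S * A * S) * (S * B) := by rw [← hspec]
    _ = (B * (S * S)) * A * ((S * S) * B) := by simp only [mul_assoc]
    _ = (B * Binv) * A * (Binv * B) := by rw [hSS]
    _ = P * A * P := by rw [← hcomm, ← hPeq]
  have hsq : (S * A * S) * (S * A * S) = U * (diagonal dc * diagonal dc) * Uᴴ := by
    rw [hspec]
    calc (U * diagonal dc * Uᴴ) * (U * diagonal dc * Uᴴ)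
        = U * diagonal dc * (Uᴴ * U) * (diagonal dc * Uᴴ) := by simp only [mul_assoc]
    _ = U * (diagonal dc * diagonal dc) * Uᴴ := by
        rw [hU'U, mul_one]; simp only [mul_assoc]
  have hidQ : (B * S * U) * diagonal (fun i => dc i * dc i) * (B * S * U)ᴴ
      = P * A * Binv * A * P := by
    rw [hVH]
    calc B * S * U * diagonal (fun i => dc i * dc i) * (Uᴴ * (S * B))
        = B * S * (U * (diagonal dc * diagonal dc) * Uᴴ) * (S * B) := by
          rw [diagonal_mul_diagonal]; simp only [mul_assoc]
    _ = B * S * ((S * A * S) * (S * A * S)) * (S * B) := by rw [← hsq]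
    _ = B * (S * S) * A * ((S * S) * A * ((S * S) * B)) := by simp only [mul_assoc]
    _ = B * Binv * A * (Binv * A * (Binv * B)) := by rw [hSS]
    _ = P * A * (Binv * A * P) := by rw [← hcomm, ← hPeq]
    _ = P * A * Binv * A * P := by simp only [mul_assoc]
  -- sum decompositions
  set E : Fin m → Matrix (Fin k) (Fin k) ℂ := fun i =>
    Φ (vecMulVec (fun r => (B * S * U) r i) (star fun r => (B * S * U) r i)) with hE
  have hEpsd : ∀ i, (E i).PosSemidef := fun i => hΦ _ (psd_vecMulVec _)
  have hC0 : Φ B = ∑ i, E i := by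
    rw [← hidB, sum_decomp', map_sum]
  have hC1 : Φ (P * A * P) = ∑ i, dc i • E i := by
    rw [← hidP, sum_decomp, map_sum]
    exact Finset.sum_congr rfl fun i _ => Φ.map_smul _ _
  have hC2 : Φ (P * A * Binv * A * P) = ∑ i, (dc i * dc i) • E i := by
    rw [← hidQ, sum_decomp, map_sum]
    exact Finset.sum_congr rfl fun i _ => Φ.map_smul _ _
  -- final algebra
  set C1 := Φ (P * A * P) with hC1def
  set C2 := Φ (P * A * Binv * A * P) with hC2def
  have hPAPpsd : (P * A * P).PosSemidef := by
    have h := hA.mul_mul_conjTranspose_same P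
    rwa [hPH] at h
  have hC1H : C1ᴴ = C1 := (hΦ _ hPAPpsd).isHermitian
  set X : Matrix (Fin k) (Fin k) ℂ := -(Cinv * C1) with hX
  have hXH : Xᴴ = -(C1 * Cinv) := by
    rw [hX, conjTranspose_neg, conjTranspose_mul, hC1H, hCinvH]
  have hfact : Xᴴ * Φ B * X + Xᴴ * C1 + C1 * X + C2 = C2 - C1 * Cinv * C1 := by
    have t1 : Xᴴ * Φ B * X = C1 * Cinv * C1 := by
      rw [hXH, hX]
      simp only [neg_mul, mul_neg, neg_neg]
      calc C1 * Cinv * Φ B * (Cinv * C1)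
          = C1 * (Cinv * Φ B * Cinv) * C1 := by simp only [mul_assoc]
      _ = C1 * Cinv * C1 := by rw [hc2]
    have t2 : Xᴴ * C1 = -(C1 * Cinv * C1) := by rw [hXH, neg_mul]
    have t3 : C1 * X = -(C1 * Cinv * C1) := by rw [hX, mul_neg, mul_assoc]
    rw [t1, t2, t3]
    abel
  rw [← hfact, hC0, hC1, hC2]
  have hsum : Xᴴ * (∑ i, E i) * X + Xᴴ * (∑ i, dc i • E i) + (∑ i, dc i • E i) * X
      + (∑ i, (dc i * dc i) • E i)
      = ∑ i, (X + dc i • 1)ᴴ * E i * (X + dc i • 1) := by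
    rw [Finset.mul_sum, Finset.sum_mul, Finset.mul_sum, Finset.sum_mul,
      ← Finset.sum_add_distrib, ← Finset.sum_add_distrib, ← Finset.sum_add_distrib]
    refine Finset.sum_congr rfl fun i _ => ?_
    rw [quad_expand]
    have hdcr : star (dc i) = dc i := by
      rw [hdc]; simp [Complex.star_def, Complex.conj_ofReal]
    rw [hdcr, mul_smul_comm, smul_mul_assoc]
    abel
  rw [hsum]
  exact psd_sum _ fun i => (hEpsd i).conjTranspose_mul_mul_same _
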